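/- arXiv:1406.5689 — 6 statements merged into one kernel-verified Lean document; each statement's English description precedes it below -/
import Mathlib

section
/- If a group G acts freely on a set X and G admits a paradoxical decomposition with translating sets S1 and S2, then the action of G on X admits a paradoxical decomposition with the same translating sets S1 and S2. -/
open Pointwise
/-- A (left-action mirror of a) paradoxical decomposition of the action of `G` on `X`
with translating sets `S1`, `S2`: pairwise disjoint pieces `P s` (`s ∈ S1`) and
`Q t` (`t ∈ S2`) with `X = ⋃ s • P s = ⋃ t • Q t`. -/
def IsParaDecomp (G X : Type*) [Group G] [MulAction G X] (S1 S2 : Finset G) : Prop :=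
  ∃ P Q : G → Set X,
    (∀ s ∈ S1, ∀ s' ∈ S1, s ≠ s' → Disjoint (P s) (P s')) ∧
    (∀ t ∈ S2, ∀ t' ∈ S2, t ≠ t' → Disjoint (Q t) (Q t')) ∧
    (∀ s ∈ S1, ∀ t ∈ S2, Disjoint (P s) (Q t)) ∧
    (⋃ s ∈ S1, s • P s) = Set.univ ∧
    (⋃ t ∈ S2, t • Q t) = Set.univ

/-- If `G` acts freely on `X` and `G` has a paradoxical decomposition with translating
sets `S1, S2`, then so does the action `G ↷ X`. -/
theorem stmt0 {G X : Type*} [Group G] [MulAction G X]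
    (hfree : ∀ (g : G) (x : X), g • x = x → g = 1)
    (S1 S2 : Finset G) (h : IsParaDecomp G G S1 S2) :
    IsParaDecomp G X S1 S2 := by
  classical
  obtain ⟨P, Q, hP, hQ, hPQ, hPc, hQc⟩ := h
  -- orbit representative
  set rep : X → X := fun x => (Quotient.mk (MulAction.orbitRel G X) x).out with hrepdef
  have hrep : ∀ x : X, ∃ g : G, g • rep x = x := by
    intro x
    have h0 : (MulAction.orbitRel G X).r (rep x) x := Quotient.mk_out x
    obtain ⟨g, hg⟩ := (MulAction.orbitRel_apply (G := G)).mp h0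
    exact ⟨g⁻¹, by rw [← hg]; simp⟩
  set γ : X → G := fun x => Classical.choose (hrep x) with hγdef
  have hγ : ∀ x : X, γ x • rep x = x := fun x => Classical.choose_spec (hrep x)
  have huniq : ∀ (x : X) (g : G), g • rep x = x → g = γ x := by
    intro x g hg
    have : ((γ x)⁻¹ * g) • rep x = rep x := by
      rw [mul_smul, hg, inv_smul_eq_iff, hγ x]
    have h1 := hfree _ _ this
    calc g = γ x * ((γ x)⁻¹ * g) := by group
      _ = γ x := by rw [h1, mul_one]
  have hrepsmul : ∀ (g : G) (x : X), rep (g • x) = rep x := by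
    intro g x
    have : (Quotient.mk (MulAction.orbitRel G X) (g • x)) =
        (Quotient.mk (MulAction.orbitRel G X) x) :=
      Quotient.sound ⟨g, rfl⟩
    simp only [hrepdef, this]
  have hγsmul : ∀ (g : G) (x : X), γ (g • x) = g * γ x := by
    intro g x
    symm
    apply huniq
    rw [hrepsmul, mul_smul, hγ x]
  -- key membership lemma
  have hmem : ∀ (R : G → Set G) (s : G) (x : X),
      x ∈ s • {y : X | γ y ∈ R s} ↔ γ x ∈ s • R s := by
    intro R s x
    rw [Set.mem_smul_set_iff_inv_smul_mem, Set.mem_smul_set_iff_inv_smul_mem]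
    simp only [Set.mem_setOf_eq, hγsmul, smul_eq_mul]
  refine ⟨fun s => {x | γ x ∈ P s}, fun t => {x | γ x ∈ Q t}, ?_, ?_, ?_, ?_, ?_⟩
  · intro s hs s' hs' hne
    rw [Set.disjoint_left]
    intro x hx hx'
    exact (Set.disjoint_left.mp (hP s hs s' hs' hne)) hx hx'
  · intro t ht t' ht' hne
    rw [Set.disjoint_left]
    intro x hx hx'
    exact (Set.disjoint_left.mp (hQ t ht t' ht' hne)) hx hx'
  · intro s hs t ht
    rw [Set.disjoint_left]
    intro x hx hx'
    exact (Set.disjoint_left.mp (hPQ s hs t ht)) hx hx'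
  · ext x
    simp only [Set.mem_iUnion, Set.mem_univ, iff_true]
    have : γ x ∈ (⋃ s ∈ S1, s • P s) := hPc ▸ Set.mem_univ _
    simp only [Set.mem_iUnion] at this
    obtain ⟨s, hs, hmem'⟩ := this
    exact ⟨s, hs, (hmem P s x).mpr hmem'⟩
  · ext x
    simp only [Set.mem_iUnion, Set.mem_univ, iff_true]
    have : γ x ∈ (⋃ t ∈ S2, t • Q t) := hQc ▸ Set.mem_univ _
    simp only [Set.mem_iUnion] at this
    obtain ⟨t, ht, hmem'⟩ := this
    exact ⟨t, ht, (hmem Q t x).mpr hmem'⟩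
end

section
/- If the free group F = ⟨x, y⟩ of rank 2 acts freely on a set X, then X has a paradoxical decomposition with translating sets {1, x} and {1, y}. -/
open Pointwise

/-- The Tarski number of the action of `G` on `X`: the minimal `|S1| + |S2|` over all
paradoxical decompositions, `⊤` if none exists. -/
noncomputable def TarskiNumber (G X : Type*) [Group G] [MulAction G X] : ℕ∞ :=
  sInf {n : ℕ∞ | ∃ S1 S2 : Finset G, IsParaDecomp G X S1 S2 ∧ n = S1.card + S2.card}


lemma head_inv_mul {α : Type*} [DecidableEq α] (a : α) (g : FreeGroup α)
    (h : g.toWord.head? ≠ some (a, true)) :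
    ((FreeGroup.of a)⁻¹ * g).toWord = (a, false) :: g.toWord := by
  have h1 : ((FreeGroup.of a)⁻¹ * g).toWord = FreeGroup.reduce ((a, false) :: g.toWord) := by
    conv_lhs => rw [← FreeGroup.mk_toWord (x := g)]
    rw [FreeGroup.of, FreeGroup.inv_mk, FreeGroup.mul_mk, FreeGroup.toWord_mk]
    congr 1
  rw [h1, FreeGroup.reduce.cons, FreeGroup.reduce_toWord]
  cases hw : g.toWord with
  | nil => simp
  | cons hd tl =>
    rw [hw] at h
    simp only [List.head?_cons] at h
    have : ¬((a, false).1 = hd.1 ∧ (a, false).2 = !hd.2) := by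
      rintro ⟨h1', h2'⟩
      apply h
      obtain ⟨b, c⟩ := hd
      simp at h1' h2'
      subst h1'
      cases c <;> simp_all
    show (if (a, false).1 = hd.1 ∧ (a, false).2 = !hd.2 then tl else (a, false) :: hd :: tl)
        = (a, false) :: hd :: tl
    rw [if_neg this]

/-- If the free group `F = ⟨x, y⟩` of rank 2 acts freely on `X`, then `X` has a
paradoxical decomposition with translating sets `{1, x}` and `{1, y}`. -/
theorem stmt1 {X : Type*} [MulAction (FreeGroup (Fin 2)) X]
    (hfree : ∀ (g : FreeGroup (Fin 2)) (x : X), g • x = x → g = 1) :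
    IsParaDecomp (FreeGroup (Fin 2)) X
      ({1, FreeGroup.of 0} : Finset (FreeGroup (Fin 2)))
      ({1, FreeGroup.of 1} : Finset (FreeGroup (Fin 2))) := by
  classical
  set F := FreeGroup (Fin 2)
  -- orbit representative
  let r : X → X := fun p => (Quotient.mk (MulAction.orbitRel F X) p).out
  have hr : ∀ p : X, ∃ g : F, g • r p = p := by
    intro p
    have h2 : (Quotient.mk (MulAction.orbitRel F X) p).out ∈ MulAction.orbit F p :=
      Quotient.mk_out (s := MulAction.orbitRel F X) p
    obtain ⟨c, hc⟩ := h2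
    refine ⟨c⁻¹, ?_⟩
    show c⁻¹ • (Quotient.mk (MulAction.orbitRel F X) p).out = p
    rw [← hc]
    exact inv_smul_smul c p
  let g : X → F := fun p => (hr p).choose
  have hg : ∀ p, g p • r p = p := fun p => (hr p).choose_spec
  have huniq : ∀ (p : X) (c : F), c • r p = p → c = g p := by
    intro p c hc
    have h1 : ((g p)⁻¹ * c) • r p = r p := by
      rw [mul_smul, hc]
      exact inv_smul_eq_iff.mpr (hg p).symm
    have h2 := hfree _ _ h1
    rw [inv_mul_eq_one] at h2
    exact h2.symm
  have htrans : ∀ (u : F) (p : X), g (u • p) = u * g p := by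
    intro u p
    have hrp : r (u • p) = r p := by
      have : Quotient.mk (MulAction.orbitRel F X) (u • p)
          = Quotient.mk (MulAction.orbitRel F X) p := Quotient.sound ⟨u, rfl⟩
      simp only [r, this]
    have : (u * g p) • r (u • p) = u • p := by rw [hrp, mul_smul, hg]
    exact (huniq _ _ this).symm
  -- pieces indexed by first letter of the reduced word
  let A : Fin 2 → Bool → Set X := fun i b => {p | (g p).toWord.head? = some (i, b)}
  have hAdisj : ∀ i b i' b', (i, b) ≠ (i', b') → Disjoint (A i b) (A i' b') := by
    intro i b i' b' hne
    rw [Set.disjoint_left]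
    intro p hp hp'
    exact hne (Option.some_injective _ (hp.symm.trans hp'))
  have hne0 : (FreeGroup.of (0 : Fin 2)) ≠ 1 := by
    intro h; simpa using congrArg FreeGroup.toWord h
  have hne1 : (FreeGroup.of (1 : Fin 2)) ≠ 1 := by
    intro h; simpa using congrArg FreeGroup.toWord h
  refine ⟨fun s => if s = 1 then A 0 true else A 0 false,
          fun t => if t = 1 then A 1 true else A 1 false, ?_, ?_, ?_, ?_, ?_⟩
  · intro s hs s' hs' hne
    simp only [Finset.mem_insert, Finset.mem_singleton] at hs hs'
    rcases hs with rfl | rfl <;> rcases hs' with rfl | rfl <;>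
      first
      | exact absurd rfl hne
      | simp only [if_pos rfl, if_neg hne0]
        first
        | exact hAdisj _ _ _ _ (by decide)
        | exact (hAdisj _ _ _ _ (by decide)).symm
  · intro s hs s' hs' hne
    simp only [Finset.mem_insert, Finset.mem_singleton] at hs hs'
    rcases hs with rfl | rfl <;> rcases hs' with rfl | rfl <;>
      first
      | exact absurd rfl hne
      | simp only [if_pos rfl, if_neg hne1]
        first
        | exact hAdisj _ _ _ _ (by decide)
        | exact (hAdisj _ _ _ _ (by decide)).symm
  · intro s hs t ht
    simp only [Finset.mem_insert, Finset.mem_singleton] at hs ht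
    rcases hs with rfl | rfl <;> rcases ht with rfl | rfl <;>
      simp only [if_pos rfl, if_neg hne0, if_neg hne1] <;>
      exact hAdisj _ _ _ _ (by decide)
  · rw [Set.eq_univ_iff_forall]
    intro p
    simp only [Finset.mem_insert, Finset.mem_singleton, Set.mem_iUnion]
    by_cases hp : (g p).toWord.head? = some ((0 : Fin 2), true)
    · refine ⟨1, Or.inl rfl, ?_⟩
      rw [Set.mem_smul_set_iff_inv_smul_mem]
      simpa [A] using hp
    · refine ⟨FreeGroup.of 0, Or.inr rfl, ?_⟩
      rw [Set.mem_smul_set_iff_inv_smul_mem]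
      simp only [if_neg hne0]
      show (g ((FreeGroup.of (0 : Fin 2))⁻¹ • p)).toWord.head? = some (0, false)
      rw [htrans, head_inv_mul _ _ hp, List.head?_cons]
  · rw [Set.eq_univ_iff_forall]
    intro p
    simp only [Finset.mem_insert, Finset.mem_singleton, Set.mem_iUnion]
    by_cases hp : (g p).toWord.head? = some ((1 : Fin 2), true)
    · refine ⟨1, Or.inl rfl, ?_⟩
      rw [Set.mem_smul_set_iff_inv_smul_mem]
      simpa [A] using hp
    · refine ⟨FreeGroup.of 1, Or.inr rfl, ?_⟩
      rw [Set.mem_smul_set_iff_inv_smul_mem]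
      simp only [if_neg hne1]
      show (g ((FreeGroup.of (1 : Fin 2))⁻¹ • p)).toWord.head? = some (1, false)
      rw [htrans, head_inv_mul _ _ hp, List.head?_cons]
end

section
/- Let H be a normal subgroup of G. If the action of G on the coset space G/H has a paradoxical decomposition, then the quotient group G/H has a paradoxical decomposition (i.e., G/H is a paradoxical group). -/
open Pointwise

/-- If `H ⊴ G` and the action of `G` on `G/H` is paradoxical, then the quotient group
`G/H` is a paradoxical group. -/
theorem stmt5 {G : Type*} [Group G] (H : Subgroup G) [H.Normal]
    (h : ∃ S1 S2 : Finset G, IsParaDecomp G (G ⧸ H) S1 S2) :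
    ∃ T1 T2 : Finset (G ⧸ H), IsParaDecomp (G ⧸ H) (G ⧸ H) T1 T2 := by
  classical
  obtain ⟨S1, S2, P, Q, hP, hQ, hPQ, hU1, hU2⟩ := h
  refine ⟨S1.image (QuotientGroup.mk), S2.image (QuotientGroup.mk),
    (fun t => ⋃ s ∈ S1.filter (fun s => (QuotientGroup.mk s : G ⧸ H) = t), P s),
    (fun t => ⋃ s ∈ S2.filter (fun s => (QuotientGroup.mk s : G ⧸ H) = t), Q s),
    ?_, ?_, ?_, ?_, ?_⟩
  · intro t ht t' ht' hne
    simp only [Set.disjoint_iUnion_left, Set.disjoint_iUnion_right, Finset.mem_filter]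
    rintro s ⟨hs, rfl⟩ s' ⟨hs', rfl⟩
    exact hP s' hs' s hs (fun e => hne (by rw [e]))
  · intro t ht t' ht' hne
    simp only [Set.disjoint_iUnion_left, Set.disjoint_iUnion_right, Finset.mem_filter]
    rintro s ⟨hs, rfl⟩ s' ⟨hs', rfl⟩
    exact hQ s' hs' s hs (fun e => hne (by rw [e]))
  · intro t ht t' ht'
    simp only [Set.disjoint_iUnion_left, Set.disjoint_iUnion_right, Finset.mem_filter]
    rintro s ⟨hs, _⟩ s' ⟨hs', _⟩
    exact hPQ s' hs' s hs
  · apply Set.eq_univ_of_univ_subset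
    rw [← hU1]
    refine Set.iUnion₂_subset fun s hs => ?_
    intro x hx
    simp only [Set.mem_iUnion]
    refine ⟨(s : G ⧸ H), Finset.mem_image_of_mem _ hs, ?_⟩
    obtain ⟨y, hy, rfl⟩ := hx
    refine ⟨y, ?_, rfl⟩
    simp only [Set.mem_iUnion]
    exact ⟨s, Finset.mem_filter.mpr ⟨hs, rfl⟩, hy⟩
  · apply Set.eq_univ_of_univ_subset
    rw [← hU2]
    refine Set.iUnion₂_subset fun s hs => ?_
    intro x hx
    simp only [Set.mem_iUnion]
    refine ⟨(s : G ⧸ H), Finset.mem_image_of_mem _ hs, ?_⟩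
    obtain ⟨y, hy, rfl⟩ := hx
    refine ⟨y, ?_, rfl⟩
    simp only [Set.mem_iUnion]
    exact ⟨s, Finset.mem_filter.mpr ⟨hs, rfl⟩, hy⟩
end

section
/- A group action G ↷ X has a paradoxical decomposition with translating sets S1, S2 if and only if every orbit of the action has a paradoxical decomposition (for the restricted action of G) with translating sets S1, S2. -/
open Pointwise

/-- A paradoxical decomposition of the action of `G` restricted to a `G`-invariant
subset `Y ⊆ X`, with translating sets `S1`, `S2`. -/
def IsParaDecompOn (G X : Type*) [Group G] [MulAction G X] (Y : Set X)
    (S1 S2 : Finset G) : Prop :=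
  ∃ P Q : G → Set X,
    (∀ s ∈ S1, P s ⊆ Y) ∧ (∀ t ∈ S2, Q t ⊆ Y) ∧
    (∀ s ∈ S1, ∀ s' ∈ S1, s ≠ s' → Disjoint (P s) (P s')) ∧
    (∀ t ∈ S2, ∀ t' ∈ S2, t ≠ t' → Disjoint (Q t) (Q t')) ∧
    (∀ s ∈ S1, ∀ t ∈ S2, Disjoint (P s) (Q t)) ∧
    (⋃ s ∈ S1, s • P s) = Y ∧
    (⋃ t ∈ S2, t • Q t) = Y

private lemma orbit_disjoint_aux {G X : Type*} [Group G] [MulAction G X] {u v z : X}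
    (hu : z ∈ MulAction.orbit G u) (hv : z ∈ MulAction.orbit G v) :
    MulAction.orbit G u = MulAction.orbit G v := by
  rw [← MulAction.orbit_eq_iff.mpr hu, MulAction.orbit_eq_iff.mpr hv]

/-- `G ↷ X` has a paradoxical decomposition with translating sets `S1, S2` iff every
orbit of the action has one with the same translating sets. -/
theorem stmt7 {G X : Type*} [Group G] [MulAction G X] (S1 S2 : Finset G) :
    IsParaDecomp G X S1 S2 ↔
      ∀ x : X, IsParaDecompOn G X (MulAction.orbit G x) S1 S2 := by
  constructor
  · rintro ⟨P, Q, hPP, hQQ, hPQ, hP, hQ⟩ x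
    set O := MulAction.orbit G x with hO
    refine ⟨fun s => P s ∩ O, fun t => Q t ∩ O, fun s _ => Set.inter_subset_right,
      fun t _ => Set.inter_subset_right,
      fun s hs s' hs' hne => ((hPP s hs s' hs' hne).mono Set.inter_subset_left Set.inter_subset_left),
      fun t ht t' ht' hne => ((hQQ t ht t' ht' hne).mono Set.inter_subset_left Set.inter_subset_left),
      fun s hs t ht => ((hPQ s hs t ht).mono Set.inter_subset_left Set.inter_subset_left), ?_, ?_⟩
    · have : ∀ s : G, s • (P s ∩ O) = s • P s ∩ O := by
        intro s
        rw [Set.smul_set_inter, hO, MulAction.smul_orbit]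
      calc (⋃ s ∈ S1, s • (P s ∩ O)) = ⋃ s ∈ S1, (s • P s ∩ O) := by
            simp only [this]
        _ = (⋃ s ∈ S1, s • P s) ∩ O := by rw [Set.iUnion₂_inter]
        _ = O := by rw [hP, Set.univ_inter]
    · have : ∀ t : G, t • (Q t ∩ O) = t • Q t ∩ O := by
        intro t
        rw [Set.smul_set_inter, hO, MulAction.smul_orbit]
      calc (⋃ t ∈ S2, t • (Q t ∩ O)) = ⋃ t ∈ S2, (t • Q t ∩ O) := by
            simp only [this]
        _ = (⋃ t ∈ S2, t • Q t) ∩ O := by rw [Set.iUnion₂_inter]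
        _ = O := by rw [hQ, Set.univ_inter]
  · intro h
    choose P Q hPsub hQsub hPP hQQ hPQ hP hQ using
      fun c : Quotient (MulAction.orbitRel G X) => h c.out
    refine ⟨fun s => ⋃ c, P c s, fun t => ⋃ c, Q c t, ?_, ?_, ?_, ?_, ?_⟩
    · intro s hs s' hs' hne
      rw [Set.disjoint_left]
      rintro z hz hz'
      simp only [Set.mem_iUnion] at hz hz'
      obtain ⟨c, hc⟩ := hz
      obtain ⟨c', hc'⟩ := hz'
      rcases eq_or_ne c c' with rfl | hcc
      · exact (hPP c s hs s' hs' hne).le_bot ⟨hc, hc'⟩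
      · have := orbit_disjoint_aux (hPsub c s hs hc) (hPsub c' s' hs' hc')
        exact hcc (by
          have h1 : (⟦c.out⟧ : Quotient (MulAction.orbitRel G X)) = ⟦c'.out⟧ :=
            Quotient.sound (MulAction.orbit_eq_iff.mp this)
          simpa [Quotient.out_eq] using h1)
    · intro t ht t' ht' hne
      rw [Set.disjoint_left]
      rintro z hz hz'
      simp only [Set.mem_iUnion] at hz hz'
      obtain ⟨c, hc⟩ := hz
      obtain ⟨c', hc'⟩ := hz'
      rcases eq_or_ne c c' with rfl | hcc
      · exact (hQQ c t ht t' ht' hne).le_bot ⟨hc, hc'⟩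
      · have := orbit_disjoint_aux (hQsub c t ht hc) (hQsub c' t' ht' hc')
        exact hcc (by
          have h1 : (⟦c.out⟧ : Quotient (MulAction.orbitRel G X)) = ⟦c'.out⟧ :=
            Quotient.sound (MulAction.orbit_eq_iff.mp this)
          simpa [Quotient.out_eq] using h1)
    · intro s hs t ht
      rw [Set.disjoint_left]
      rintro z hz hz'
      simp only [Set.mem_iUnion] at hz hz'
      obtain ⟨c, hc⟩ := hz
      obtain ⟨c', hc'⟩ := hz'
      rcases eq_or_ne c c' with rfl | hcc
      · exact (hPQ c s hs t ht).le_bot ⟨hc, hc'⟩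
      · have := orbit_disjoint_aux (hPsub c s hs hc) (hQsub c' t ht hc')
        exact hcc (by
          have h1 : (⟦c.out⟧ : Quotient (MulAction.orbitRel G X)) = ⟦c'.out⟧ :=
            Quotient.sound (MulAction.orbit_eq_iff.mp this)
          simpa [Quotient.out_eq] using h1)
    · apply Set.eq_univ_of_forall
      intro z
      letI : Setoid X := MulAction.orbitRel G X
      set c : Quotient (MulAction.orbitRel G X) := Quotient.mk _ z with hc
      have hz : z ∈ MulAction.orbit G c.out := Setoid.symm (Quotient.mk_out z)
      rw [← hP c] at hz
      simp only [Set.mem_iUnion] at hz ⊢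
      obtain ⟨s, hs, hzs⟩ := hz
      rw [Set.mem_smul_set] at hzs
      obtain ⟨y, hy, hye⟩ := hzs
      exact ⟨s, hs, hye ▸ Set.smul_mem_smul_set (Set.mem_iUnion.mpr ⟨c, hy⟩)⟩
    · apply Set.eq_univ_of_forall
      intro z
      letI : Setoid X := MulAction.orbitRel G X
      set c : Quotient (MulAction.orbitRel G X) := Quotient.mk _ z with hc
      have hz : z ∈ MulAction.orbit G c.out := Setoid.symm (Quotient.mk_out z)
      rw [← hQ c] at hz
      simp only [Set.mem_iUnion] at hz ⊢
      obtain ⟨t, ht, hzs⟩ := hz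
      rw [Set.mem_smul_set] at hzs
      obtain ⟨y, hy, hye⟩ := hzs
      exact ⟨t, ht, hye ▸ Set.smul_mem_smul_set (Set.mem_iUnion.mpr ⟨c, hy⟩)⟩
end

section
/- Let G ↷ X be a group action and S1, S2 finite subsets of G. If G ↷ X has a paradoxical decomposition with translating sets S1, S2, then for any pair of finite subsets A1, A2 ⊆ X one has |A1·S1^{-1} ∪ A2·S2^{-1}| ≥ |A1| + |A2|. -/
open Pointwise

/-- If `G ↷ X` has a paradoxical decomposition with translating sets `S1, S2`, then for
all finite `A1, A2 ⊆ X` one has `|A1·S1⁻¹ ∪ A2·S2⁻¹| ≥ |A1| + |A2|` (in the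
left-action mirror, `A·S⁻¹` is `{s⁻¹ • a : s ∈ S, a ∈ A}`). -/
theorem stmt9 {G X : Type*} [Group G] [MulAction G X] [DecidableEq X]
    (S1 S2 : Finset G) (h : IsParaDecomp G X S1 S2) (A1 A2 : Finset X) :
    A1.card + A2.card ≤
      ((S1.biUnion fun s => A1.image fun a => s⁻¹ • a) ∪
        (S2.biUnion fun t => A2.image fun a => t⁻¹ • a)).card := by
  classical
  obtain ⟨P, Q, hP, hQ, hPQ, hU1, hU2⟩ := h
  have h1 : ∀ a : X, ∃ s ∈ S1, a ∈ s • P s := by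
    intro a
    have : a ∈ (⋃ s ∈ S1, s • P s) := hU1 ▸ Set.mem_univ a
    simpa using this
  have h2 : ∀ a : X, ∃ t ∈ S2, a ∈ t • Q t := by
    intro a
    have : a ∈ (⋃ t ∈ S2, t • Q t) := hU2 ▸ Set.mem_univ a
    simpa using this
  choose σ hσS hσ using h1
  choose τ hτS hτ using h2
  have hf1mem : ∀ a : X, (σ a)⁻¹ • a ∈ P (σ a) := fun a => by
    have := hσ a; rwa [Set.mem_smul_set_iff_inv_smul_mem] at this
  have hf2mem : ∀ a : X, (τ a)⁻¹ • a ∈ Q (τ a) := fun a => by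
    have := hτ a; rwa [Set.mem_smul_set_iff_inv_smul_mem] at this
  set B := ((S1.biUnion fun s => A1.image fun a => s⁻¹ • a) ∪
      (S2.biUnion fun t => A2.image fun a => t⁻¹ • a)) with hB
  set T1 := A1.image fun a => (σ a)⁻¹ • a with hT1
  set T2 := A2.image fun a => (τ a)⁻¹ • a with hT2
  have hT1B : T1 ⊆ B := by
    intro x hx
    obtain ⟨a, ha, rfl⟩ := Finset.mem_image.mp hx
    exact Finset.mem_union_left _ (Finset.mem_biUnion.mpr
      ⟨σ a, hσS a, Finset.mem_image.mpr ⟨a, ha, rfl⟩⟩)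
  have hT2B : T2 ⊆ B := by
    intro x hx
    obtain ⟨a, ha, rfl⟩ := Finset.mem_image.mp hx
    exact Finset.mem_union_right _ (Finset.mem_biUnion.mpr
      ⟨τ a, hτS a, Finset.mem_image.mpr ⟨a, ha, rfl⟩⟩)
  have hd : Disjoint T1 T2 := by
    rw [Finset.disjoint_left]
    intro x hx1 hx2
    obtain ⟨a, ha, rfl⟩ := Finset.mem_image.mp hx1
    obtain ⟨b, hb, heq⟩ := Finset.mem_image.mp hx2
    have hqb : (σ a)⁻¹ • a ∈ Q (τ b) := heq ▸ hf2mem b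
    exact (hPQ (σ a) (hσS a) (τ b) (hτS b)).le_bot ⟨hf1mem a, hqb⟩
  have hc1 : T1.card = A1.card := Finset.card_image_of_injOn (by
    intro a ha b hb heq
    simp only at heq
    have hss : σ a = σ b := by
      by_contra hne
      exact (hP (σ a) (hσS a) (σ b) (hσS b) hne).le_bot ⟨hf1mem a, heq ▸ hf1mem b⟩
    have : (σ a)⁻¹ • a = (σ a)⁻¹ • b := by rw [heq, hss]
    exact smul_left_cancel _ this)
  have hc2 : T2.card = A2.card := Finset.card_image_of_injOn (by
    intro a ha b hb heq
    simp only at heq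
    have hss : τ a = τ b := by
      by_contra hne
      exact (hQ (τ a) (hτS a) (τ b) (hτS b) hne).le_bot ⟨hf2mem a, heq ▸ hf2mem b⟩
    have : (τ a)⁻¹ • a = (τ a)⁻¹ • b := by rw [heq, hss]
    exact smul_left_cancel _ this)
  calc A1.card + A2.card = (T1 ∪ T2).card := by
        rw [Finset.card_union_of_disjoint hd, hc1, hc2]
    _ ≤ B.card := Finset.card_le_card (Finset.union_subset hT1B hT2B)
end

section
/- Let F = ⟨x_1, x_2⟩ be a free group of rank 2 acting on a set X such that the action is the disjoint union of F-invariant sets Y_1, ..., Y_n, and suppose there is a partition index function such that for each j, some rank-2 free subgroup ⟨a, b_j⟩ ≤ F (with a fixed and b_j depending on j) acts freely on Y_j. Then the action of the subgroup ⟨a, b_1, ..., b_n⟩ on X has a paradoxical decomposition with translating sets {1, a} and {1, b_1, ..., b_n}; in particular its Tarski number is at most n + 3. -/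
open Pointwise

namespace Stmt16Aux

/-- cons lemma: left-multiplying by a single letter that does not cancel. -/
lemma mk_single_mul_toWord {α : Type*} [DecidableEq α] (p : α × Bool) (u : FreeGroup α)
    (h : u.toWord.head? ≠ some (p.1, !p.2)) :
    (FreeGroup.mk [p] * u).toWord = p :: u.toWord := by
  have h1 : FreeGroup.mk [p] * u = FreeGroup.mk (p :: u.toWord) := by
    conv_lhs => rw [← FreeGroup.mk_toWord (x := u)]
    rw [FreeGroup.mul_mk, List.singleton_append]
  rw [h1, FreeGroup.toWord_mk, FreeGroup.reduce.cons, FreeGroup.reduce_toWord]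
  cases hw : u.toWord with
  | nil => rfl
  | cons hd tl =>
    have hne : ¬ (p.1 = hd.1 ∧ p.2 = !hd.2) := by
      rintro ⟨h1', h2'⟩
      apply h
      rw [hw]
      simp only [List.head?_cons, Option.some.injEq]
      obtain ⟨c, β⟩ := hd
      simp only [Prod.mk.injEq]
      constructor
      · exact h1'.symm
      · cases β <;> simp_all
    simp [hne]

lemma inv_of_eq {α : Type*} (c : α) : (FreeGroup.of c)⁻¹ = FreeGroup.mk [(c, false)] := by
  show (FreeGroup.mk [(c, true)])⁻¹ = _
  rw [FreeGroup.inv_mk]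
  simp [FreeGroup.invRev]

lemma range_le_closure {G : Type*} [Group G] (φ : FreeGroup Bool →* G) (u : FreeGroup Bool) :
    φ u ∈ Subgroup.closure {φ (FreeGroup.of false), φ (FreeGroup.of true)} := by
  have h : φ.range ≤ Subgroup.closure {φ (FreeGroup.of false), φ (FreeGroup.of true)} := by
    rw [MonoidHom.range_eq_map, ← FreeGroup.closure_range_of Bool,
      MonoidHom.map_closure]
    apply Subgroup.closure_le _ |>.mpr
    rintro g ⟨_, ⟨c, rfl⟩, rfl⟩
    cases c
    · exact Subgroup.subset_closure (Or.inl rfl)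
    · exact Subgroup.subset_closure (Or.inr rfl)
  exact h ⟨u, rfl⟩

/-- The main construction: a paradoxical decomposition with translating sets
`{1, a}` and `{1, b 0, …, b (n-1)}`. -/
lemma paraDecomp_aux {G X : Type*} [Group G] [MulAction G X]
    {n : ℕ} (a : G) (b : Fin n → G) (Y : Fin n → Set X)
    (hdisj : ∀ i j, i ≠ j → Disjoint (Y i) (Y j))
    (hcover : (⋃ j, Y j) = Set.univ)
    (hinv : ∀ j : Fin n, ∀ g ∈ Subgroup.closure {a, b j}, ∀ x ∈ Y j, g • x ∈ Y j)
    (hfreegen : ∀ j : Fin n, ∃ φ : FreeGroup Bool →* G,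
      Function.Injective φ ∧ φ (FreeGroup.of false) = a ∧ φ (FreeGroup.of true) = b j)
    (hfreeact : ∀ j : Fin n, ∀ w ∈ Subgroup.closure {a, b j},
      ∀ x ∈ Y j, w • x = x → w = 1)
    (s1 s2 : Finset G)
    (hs1 : ∀ g, g ∈ s1 ↔ g = 1 ∨ g = a)
    (hs2 : ∀ g, g ∈ s2 ↔ g = 1 ∨ ∃ j, g = b j) :
    IsParaDecomp G X s1 s2 := by
  classical
  -- the index of the piece containing x
  have hex : ∀ x : X, ∃ j, x ∈ Y j := fun x => by
    have : x ∈ ⋃ j, Y j := hcover ▸ Set.mem_univ x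
    exact Set.mem_iUnion.mp this
  choose J hJ using hex
  have hJu : ∀ (x : X) (j : Fin n), x ∈ Y j → J x = j := by
    intro x j hx
    by_contra hne
    exact (Set.disjoint_left.mp (hdisj _ _ hne) (hJ x)) hx
  choose φ hφinj hφa hφb using hfreegen
  have hmemK : ∀ (j : Fin n) (u : FreeGroup Bool), φ j u ∈ Subgroup.closure {a, b j} := by
    intro j u
    have := range_le_closure (φ j) u
    rwa [hφa, hφb] at this
  have hsurj : ∀ (j : Fin n), ∀ w ∈ Subgroup.closure {a, b j}, ∃ u, φ j u = w := by
    intro j w hw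
    have h : Subgroup.closure {a, b j} ≤ (φ j).range := by
      rw [Subgroup.closure_le]
      rintro g (rfl | rfl)
      · exact ⟨FreeGroup.of false, hφa j⟩
      · exact ⟨FreeGroup.of true, hφb j⟩
    exact h hw
  -- orbit representatives
  let repF : Fin n → X → X := fun j x =>
    (Quotient.mk (MulAction.orbitRel (Subgroup.closure {a, b j}) X) x).out
  have hrep1 : ∀ (j : Fin n) (x : X), ∃ h ∈ Subgroup.closure {a, b j}, repF j x = h • x := by
    intro j x
    have h := Quotient.mk_out (s := MulAction.orbitRel (Subgroup.closure {a, b j}) X) x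
    rw [MulAction.orbitRel_apply] at h
    obtain ⟨g, hg⟩ := h
    exact ⟨(g : G), g.2, hg.symm⟩
  have hrep2 : ∀ (j : Fin n) (x : X) (g : G), g ∈ Subgroup.closure {a, b j} →
      repF j (g • x) = repF j x := by
    intro j x g hg
    apply congrArg Quotient.out
    apply Quotient.sound
    exact MulAction.orbitRel_apply.mpr ⟨⟨g, hg⟩, rfl⟩
  have hrepY : ∀ x : X, repF (J x) x ∈ Y (J x) := by
    intro x
    obtain ⟨h, hh, hrep⟩ := hrep1 (J x) x
    rw [hrep]
    exact hinv _ _ hh _ (hJ x)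
  -- the "word" of x relative to its orbit representative
  have hexu : ∀ x : X, ∃ u : FreeGroup Bool, φ (J x) u • repF (J x) x = x := by
    intro x
    obtain ⟨h, hh, hrep⟩ := hrep1 (J x) x
    obtain ⟨u, hu⟩ := hsurj (J x) h⁻¹ (inv_mem hh)
    refine ⟨u, ?_⟩
    rw [hu, hrep, inv_smul_smul]
  choose U hU using hexu
  have huniq : ∀ (x : X) (v : FreeGroup Bool), φ (J x) v • repF (J x) x = x → v = U x := by
    intro x v hv
    have hfix : ((φ (J x) (U x))⁻¹ * φ (J x) v) • repF (J x) x = repF (J x) x := by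
      rw [mul_smul, hv, inv_smul_eq_iff]
      exact (hU x).symm
    rw [← map_inv, ← map_mul] at hfix
    have h1 := hfreeact (J x) _ (hmemK (J x) ((U x)⁻¹ * v)) _ (hrepY x) hfix
    have h2 : (U x)⁻¹ * v = 1 := hφinj (J x) (by rw [h1, map_one])
    exact (inv_mul_eq_one.mp h2).symm
  have htr : ∀ (x : X) (v : FreeGroup Bool),
      J (φ (J x) v • x) = J x ∧ U (φ (J x) v • x) = v * U x := by
    intro x v
    have hyY : φ (J x) v • x ∈ Y (J x) := hinv _ _ (hmemK _ _) _ (hJ x)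
    have hJy : J (φ (J x) v • x) = J x := hJu _ _ hyY
    refine ⟨hJy, ?_⟩
    have key : φ (J (φ (J x) v • x)) (v * U x) • repF (J (φ (J x) v • x)) (φ (J x) v • x)
        = φ (J x) v • x := by
      rw [hJy, hrep2 (J x) x _ (hmemK _ _), map_mul, mul_smul, hU x]
    exact (huniq _ _ key).symm
  -- some non-degeneracy facts (available whenever some point exists)
  have hane : ∀ x : X, a ≠ 1 := by
    intro x h
    have : FreeGroup.of false = (1 : FreeGroup Bool) :=
      hφinj (J x) (by rw [hφa, map_one, h])
    simpa using congrArg FreeGroup.toWord this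
  have hbne : ∀ (x : X) (j : Fin n), b j ≠ 1 := by
    intro x j h
    have : FreeGroup.of true = (1 : FreeGroup Bool) :=
      hφinj j (by rw [hφb, map_one, h])
    simpa using congrArg FreeGroup.toWord this
  -- the pieces
  let cls : X → Option (Bool × Bool) := fun x => (U x).toWord.head?
  let P : G → Set X := fun s =>
    if s = 1 then {x | cls x = some (false, true)} else {x | cls x = some (false, false)}
  let Q : G → Set X := fun t =>
    if t = 1 then {x | cls x = some (true, true)}
    else {x | cls x = some (true, false) ∧ b (J x) = t}
  have hPfst : ∀ (s : G) (x : X), x ∈ P s → ∃ β, cls x = some (false, β) := by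
    intro s x hx
    by_cases h : s = 1 <;> simp only [P, h, if_pos, if_neg, if_true, if_false] at hx <;>
      first
        | exact ⟨true, hx⟩
        | exact ⟨false, hx⟩
  have hQfst : ∀ (t : G) (x : X), x ∈ Q t → ∃ β, cls x = some (true, β) := by
    intro t x hx
    by_cases h : t = 1 <;> simp only [Q, h, if_pos, if_neg, if_true, if_false] at hx
    · exact ⟨true, hx⟩
    · exact ⟨false, hx.1⟩
  refine ⟨P, Q, ?_, ?_, ?_, ?_, ?_⟩
  · -- P pairwise disjoint
    intro s hs s' hs' hne
    rw [Set.disjoint_left]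
    intro x hx hx'
    rcases (hs1 s).mp hs with rfl | rfl <;> rcases (hs1 s').mp hs' with rfl | rfl
    · exact hne rfl
    · have ha1 := hane x
      simp only [P, if_pos rfl, if_neg ha1, Set.mem_setOf_eq] at hx hx'
      rw [hx] at hx'
      simp at hx'
    · have ha1 := hane x
      simp only [P, if_pos rfl, if_neg ha1, Set.mem_setOf_eq] at hx hx'
      rw [hx] at hx'
      simp at hx'
    · exact hne rfl
  · -- Q pairwise disjoint
    intro t ht t' ht' hne
    rw [Set.disjoint_left]
    intro x hx hx'
    rcases (hs2 t).mp ht with rfl | ⟨i, rfl⟩ <;> rcases (hs2 t').mp ht' with rfl | ⟨j, rfl⟩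
    · exact hne rfl
    · have hb1 := hbne x j
      simp only [Q, if_pos rfl, if_neg hb1, Set.mem_setOf_eq] at hx hx'
      rw [hx] at hx'
      simp at hx'
    · have hb1 := hbne x i
      simp only [Q, if_pos rfl, if_neg hb1, Set.mem_setOf_eq] at hx hx'
      rw [hx'] at hx
      simp at hx
    · have hb1 := hbne x i
      have hb1' := hbne x j
      simp only [Q, if_neg hb1, if_neg hb1', Set.mem_setOf_eq] at hx hx'
      exact hne (hx.2 ▸ hx'.2)
  · -- P disjoint from Q
    intro s hs t ht
    rw [Set.disjoint_left]
    intro x hx hx'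
    obtain ⟨β, hβ⟩ := hPfst s x hx
    obtain ⟨β', hβ'⟩ := hQfst t x hx'
    rw [hβ] at hβ'
    simp at hβ'
  · -- covering by P
    rw [Set.eq_univ_iff_forall]
    intro x
    rw [Set.mem_iUnion₂]
    by_cases hc : cls x = some (false, true)
    · refine ⟨1, (hs1 1).mpr (Or.inl rfl), ?_⟩
      rw [one_smul]
      simp only [P, if_pos rfl, Set.mem_setOf_eq]
      exact hc
    · refine ⟨a, (hs1 a).mpr (Or.inr rfl), ?_⟩
      have key : a⁻¹ • x ∈ P a := by
        have hinvphi : a⁻¹ = φ (J x) ((FreeGroup.of false)⁻¹) := by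
          rw [map_inv, hφa]
        have h2 := (htr x ((FreeGroup.of false)⁻¹)).2
        have hcls : cls (a⁻¹ • x) = some (false, false) := by
          show (U (a⁻¹ • x)).toWord.head? = _
          rw [hinvphi, h2, inv_of_eq,
            mk_single_mul_toWord (false, false) (U x) (by simpa using hc)]
          rfl
        simp only [P, if_neg (hane x), Set.mem_setOf_eq]
        exact hcls
      have := Set.smul_mem_smul_set (a := a) key
      rwa [smul_inv_smul] at this
  · -- covering by Q
    rw [Set.eq_univ_iff_forall]
    intro x
    rw [Set.mem_iUnion₂]
    by_cases hc : cls x = some (true, true)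
    · refine ⟨1, (hs2 1).mpr (Or.inl rfl), ?_⟩
      rw [one_smul]
      simp only [Q, if_pos rfl, Set.mem_setOf_eq]
      exact hc
    · refine ⟨b (J x), (hs2 (b (J x))).mpr (Or.inr ⟨J x, rfl⟩), ?_⟩
      have key : (b (J x))⁻¹ • x ∈ Q (b (J x)) := by
        have hinvphi : (b (J x))⁻¹ = φ (J x) ((FreeGroup.of true)⁻¹) := by
          rw [map_inv, hφb]
        obtain ⟨hJ2, h2⟩ := htr x ((FreeGroup.of true)⁻¹)
        rw [← hinvphi] at hJ2 h2
        have hcls : cls ((b (J x))⁻¹ • x) = some (true, false) := by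
          show (U ((b (J x))⁻¹ • x)).toWord.head? = _
          rw [h2, inv_of_eq,
            mk_single_mul_toWord (true, false) (U x) (by simpa using hc)]
          rfl
        simp only [Q, if_neg (hbne x (J x)), Set.mem_setOf_eq]
        exact ⟨hcls, by rw [hJ2]⟩
      have := Set.smul_mem_smul_set (a := b (J x)) key
      rwa [smul_inv_smul] at this

end Stmt16Aux

/-- Suppose the free group `F` of rank 2 acts on `X`, `X` is partitioned into sets
`Y_1, …, Y_n` invariant under the subgroup `K = ⟨a, b_1, …, b_n⟩`, and for each `j` the
elements `a, b_j` freely generate a rank-2 free subgroup which acts freely on `Y_j`.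
Then `K ↷ X` has a paradoxical decomposition with translating sets `{1, a}` and
`{1, b_1, …, b_n}`; in particular the Tarski number of `K ↷ X` is at most `n + 3`. -/
theorem stmt16 {X : Type*} [MulAction (FreeGroup (Fin 2)) X] (n : ℕ)
    (a : FreeGroup (Fin 2)) (b : Fin n → FreeGroup (Fin 2))
    (Y : Fin n → Set X)
    (hdisj : ∀ i j, i ≠ j → Disjoint (Y i) (Y j))
    (hcover : (⋃ j, Y j) = Set.univ)
    (hinv : ∀ (j : Fin n), ∀ g ∈ Subgroup.closure ({a} ∪ Set.range b),
      ∀ x ∈ Y j, g • x ∈ Y j)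
    (hfreegen : ∀ j : Fin n, ∃ φ : FreeGroup Bool →* FreeGroup (Fin 2),
      Function.Injective φ ∧ φ (FreeGroup.of false) = a ∧ φ (FreeGroup.of true) = b j)
    (hfreeact : ∀ j : Fin n, ∀ w ∈ Subgroup.closure {a, b j},
      ∀ x ∈ Y j, w • x = x → w = 1) :
    IsParaDecomp (FreeGroup (Fin 2)) X ({1, a} : Finset (FreeGroup (Fin 2)))
        (insert 1 (Finset.image b Finset.univ)) ∧
      TarskiNumber (Subgroup.closure ({a} ∪ Set.range b)) X ≤ (n + 3 : ℕ∞) := by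
  classical
  have hsub : ∀ j : Fin n, ({a, b j} : Set (FreeGroup (Fin 2))) ⊆ {a} ∪ Set.range b := by
    rintro j g (rfl | rfl)
    · exact Or.inl rfl
    · exact Or.inr ⟨j, rfl⟩
  have hinv' : ∀ j : Fin n, ∀ g ∈ Subgroup.closure {a, b j}, ∀ x ∈ Y j, g • x ∈ Y j :=
    fun j g hg x hx => hinv j g (Subgroup.closure_mono (hsub j) hg) x hx
  constructor
  · apply Stmt16Aux.paraDecomp_aux a b Y hdisj hcover hinv' hfreegen hfreeact
    · intro g; simp [Finset.mem_insert]
    · intro g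
      simp only [Finset.mem_insert, Finset.mem_image, Finset.mem_univ, true_and]
      constructor
      · rintro (rfl | ⟨j, rfl⟩)
        · exact Or.inl rfl
        · exact Or.inr ⟨j, rfl⟩
      · rintro (rfl | ⟨j, rfl⟩)
        · exact Or.inl rfl
        · exact Or.inr ⟨j, rfl⟩
  · set K := Subgroup.closure ({a} ∪ Set.range b) with hK
    have haK : a ∈ K := Subgroup.subset_closure (Or.inl rfl)
    have hbK : ∀ j, b j ∈ K := fun j => Subgroup.subset_closure (Or.inr ⟨j, rfl⟩)
    set a' : K := ⟨a, haK⟩ with ha'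
    set b' : Fin n → K := fun j => ⟨b j, hbK j⟩ with hb'
    have hcl : ∀ (j : Fin n), ∀ w ∈ Subgroup.closure {a', b' j},
        (w : FreeGroup (Fin 2)) ∈ Subgroup.closure {a, b j} := by
      intro j w hw
      have h : Subgroup.closure {a', b' j} ≤
          (Subgroup.closure {a, b j}).comap K.subtype := by
        rw [Subgroup.closure_le]
        rintro g (rfl | rfl) <;>
          exact Subgroup.mem_comap.mpr (Subgroup.subset_closure (by simp [ha', hb']))
      exact h hw
    have hpara : IsParaDecomp K X ({1, a'} : Finset K)
        (insert 1 (Finset.image b' Finset.univ)) := by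
      apply Stmt16Aux.paraDecomp_aux a' b' Y hdisj hcover
      · intro j g hg x hx
        exact hinv' j (g : FreeGroup (Fin 2)) (hcl j g hg) x hx
      · intro j
        obtain ⟨φ, hφinj, hφa, hφb⟩ := hfreegen j
        have hmem : ∀ u, φ u ∈ K := by
          intro u
          have h1 := Stmt16Aux.range_le_closure φ u
          rw [hφa, hφb] at h1
          exact Subgroup.closure_mono (hsub j) h1
        refine ⟨φ.codRestrict K hmem, ?_, ?_, ?_⟩
        · intro u v huv
          exact hφinj (congrArg Subtype.val huv)
        · exact Subtype.ext hφa
        · exact Subtype.ext hφb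
      · intro j w hw x hx hfix
        exact Subtype.ext (hfreeact j (w : FreeGroup (Fin 2)) (hcl j w hw) x hx hfix)
      · intro g; simp [Finset.mem_insert]
      · intro g
        simp only [Finset.mem_insert, Finset.mem_image, Finset.mem_univ, true_and]
        constructor
        · rintro (rfl | ⟨j, rfl⟩)
          · exact Or.inl rfl
          · exact Or.inr ⟨j, rfl⟩
        · rintro (rfl | ⟨j, rfl⟩)
          · exact Or.inl rfl
          · exact Or.inr ⟨j, rfl⟩
    have hmemset : ((({1, a'} : Finset K).card : ℕ∞) +
        ((insert 1 (Finset.image b' Finset.univ) : Finset K).card : ℕ∞)) ∈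
        {m : ℕ∞ | ∃ S1 S2 : Finset K, IsParaDecomp K X S1 S2 ∧ m = S1.card + S2.card} :=
      ⟨_, _, hpara, rfl⟩
    have h1 : TarskiNumber K X ≤ _ := sInf_le hmemset
    refine h1.trans ?_
    have hc1 : ({1, a'} : Finset K).card ≤ 2 := by
      apply Finset.card_insert_le _ _ |>.trans
      simp
    have hc2 : (insert 1 (Finset.image b' Finset.univ) : Finset K).card ≤ n + 1 := by
      apply Finset.card_insert_le _ _ |>.trans
      have := Finset.card_image_le (s := (Finset.univ : Finset (Fin n))) (f := b')
      simp only [Finset.card_univ, Fintype.card_fin] at this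
      omega
    have : ({1, a'} : Finset K).card +
        (insert 1 (Finset.image b' Finset.univ) : Finset K).card ≤ n + 3 := by omega
    calc (({1, a'} : Finset K).card : ℕ∞) + _ =
        ((({1, a'} : Finset K).card + (insert 1 (Finset.image b' Finset.univ) : Finset K).card : ℕ) : ℕ∞) := by
          push_cast; rfl
      _ ≤ ((n + 3 : ℕ) : ℕ∞) := by exact_mod_cast this
      _ = (n + 3 : ℕ∞) := by push_cast; rfl
end
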